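/- Assume A satisfies conditions (h2), (h3), (h4), (h5). Then: (a) μ₁ ≤ 1; (b) for every (t, ξ) with |(t, ξ)| ≥ R one has A(t, ξ) ≥ (θμ₁ + μ₂) a(t, ξ)·ξ ≥ (θμ₁ + μ₂) λ |ξ|^p ≥ 0; (c) there exists a constant η₃ > 0 such that A(t, ξ) ≥ (θμ₁ + μ₂) λ |ξ|^p − η₃ for all (t, ξ) ∈ ℝ × ℝ^N. -/
import Mathlib


open scoped RealInnerProductSpace

/-- `a(t, ξ) = ∇_ξ A(t, ξ)`, the gradient of `A` in the `ξ` variable. -/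
noncomputable def gradA {N : ℕ} (A : ℝ → EuclideanSpace ℝ (Fin N) → ℝ)
    (t : ℝ) (ξ : EuclideanSpace ℝ (Fin N)) : EuclideanSpace ℝ (Fin N) :=
  gradient (A t) ξ

/-- `A_t(t, ξ) = ∂A/∂t (t, ξ)`. -/
noncomputable def Adert {N : ℕ} (A : ℝ → EuclideanSpace ℝ (Fin N) → ℝ)
    (t : ℝ) (ξ : EuclideanSpace ℝ (Fin N)) : ℝ :=
  deriv (fun s => A s ξ) t

/-- The Euclidean norm of the pair `(t, ξ) ∈ ℝ × ℝ^N`. -/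
noncomputable def pairNorm {N : ℕ} (t : ℝ) (ξ : EuclideanSpace ℝ (Fin N)) : ℝ :=
  Real.sqrt (t ^ 2 + ‖ξ‖ ^ 2)

theorem lower_bound_estimates {N : ℕ} (hN : 2 ≤ N)
    (p R lam η₁ η₂ μ₁ θ μ₂ : ℝ) (hp : 1 < p) (hR : 1 ≤ R)
    (A : ℝ → EuclideanSpace ℝ (Fin N) → ℝ)
    (hA : ContDiff ℝ 1 (fun q : ℝ × EuclideanSpace ℝ (Fin N) => A q.1 q.2))
    -- (h2)
    (hlam : 0 < lam)
    (h2 : ∀ t ξ, lam * ‖ξ‖ ^ p ≤ ⟪gradA A t ξ, ξ⟫)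
    -- (h3)
    (hη₁ : 0 < η₁) (hη₂ : 0 < η₂)
    (h3a : ∀ t ξ, R ≤ pairNorm t ξ → A t ξ ≤ η₁ * ⟪gradA A t ξ, ξ⟫)
    (h3b : ∀ t ξ, pairNorm t ξ ≤ R → |A t ξ| ≤ η₂)
    -- (h4)
    (hμ₁ : 0 < μ₁)
    (h4 : ∀ t ξ, R ≤ pairNorm t ξ →
      μ₁ * ⟪gradA A t ξ, ξ⟫ ≤ ⟪gradA A t ξ, ξ⟫ + Adert A t ξ * t)
    -- (h5)
    (hθ : 0 < θ) (hθp : θ < 1 / p) (hμ₂ : 0 < μ₂)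
    (h5 : ∀ t ξ, R ≤ pairNorm t ξ →
      μ₂ * ⟪gradA A t ξ, ξ⟫ ≤
        A t ξ - θ * ⟪gradA A t ξ, ξ⟫ - θ * (Adert A t ξ * t)) :
    -- (a)
    μ₁ ≤ 1 ∧
    -- (b)
    (∀ t ξ, R ≤ pairNorm t ξ →
      (θ * μ₁ + μ₂) * ⟪gradA A t ξ, ξ⟫ ≤ A t ξ ∧
      (θ * μ₁ + μ₂) * lam * ‖ξ‖ ^ p ≤ (θ * μ₁ + μ₂) * ⟪gradA A t ξ, ξ⟫ ∧
      0 ≤ (θ * μ₁ + μ₂) * lam * ‖ξ‖ ^ p) ∧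
    -- (c)
    (∃ η₃ : ℝ, 0 < η₃ ∧ ∀ t ξ,
      (θ * μ₁ + μ₂) * lam * ‖ξ‖ ^ p - η₃ ≤ A t ξ) := by
  
  have hcoef : (0:ℝ) < θ * μ₁ + μ₂ := by positivity
  have hR0 : (0:ℝ) < R := by linarith
  have hp0 : (0:ℝ) < p := by linarith
  have hpn_norm : ∀ (t : ℝ) (ξ : EuclideanSpace ℝ (Fin N)), ‖ξ‖ ≤ pairNorm t ξ := by
    intro t ξ
    have : ‖ξ‖ = Real.sqrt (‖ξ‖ ^ 2) := by
      rw [Real.sqrt_sq (norm_nonneg ξ)]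
    rw [this, pairNorm]
    apply Real.sqrt_le_sqrt
    nlinarith [sq_nonneg t, Real.sq_sqrt (sq_nonneg ‖ξ‖)]
  -- part (b) as a lemma
  have hb : ∀ t ξ, R ≤ pairNorm t ξ →
      (θ * μ₁ + μ₂) * ⟪gradA A t ξ, ξ⟫ ≤ A t ξ ∧
      (θ * μ₁ + μ₂) * lam * ‖ξ‖ ^ p ≤ (θ * μ₁ + μ₂) * ⟪gradA A t ξ, ξ⟫ ∧
      0 ≤ (θ * μ₁ + μ₂) * lam * ‖ξ‖ ^ p := by
    intro t ξ hpn
    have h2' := h2 t ξ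
    have h4' := h4 t ξ hpn
    have h5' := h5 t ξ hpn
    have hsnn : (0:ℝ) ≤ ⟪gradA A t ξ, ξ⟫ := by
      have : (0:ℝ) ≤ lam * ‖ξ‖ ^ p := by positivity
      linarith
    refine ⟨by nlinarith, ?_, by positivity⟩
    have := mul_le_mul_of_nonneg_left h2' (le_of_lt hcoef)
    linarith [this]
  refine ⟨?_, hb, ?_⟩
  · -- (a)
    have hNpos : 0 < N := by omega
    set ξ : EuclideanSpace ℝ (Fin N) := EuclideanSpace.single ⟨0, hNpos⟩ R with hξdef
    have hξ : ‖ξ‖ = R := by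
      rw [hξdef, EuclideanSpace.norm_single, Real.norm_eq_abs, abs_of_pos hR0]
    have hpn : pairNorm (0:ℝ) ξ = R := by
      rw [pairNorm, hξ]
      simp
      rw [Real.sqrt_sq (le_of_lt hR0)]
    have hs : 0 < ⟪gradA A 0 ξ, ξ⟫ := by
      have h2' := h2 0 ξ
      have : (0:ℝ) < lam * ‖ξ‖ ^ p := by
        rw [hξ]; positivity
      linarith
    have h4' := h4 0 ξ (le_of_eq hpn.symm)
    simp only [mul_zero] at h4'
    nlinarith
  · -- (c)
    refine ⟨η₂ + (θ * μ₁ + μ₂) * lam * R ^ p, by positivity, ?_⟩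
    intro t ξ
    rcases le_total (pairNorm t ξ) R with hle | hge
    · have hAb := h3b t ξ hle
      have hξR : ‖ξ‖ ≤ R := le_trans (hpn_norm t ξ) hle
      have hpow : ‖ξ‖ ^ p ≤ R ^ p :=
        Real.rpow_le_rpow (norm_nonneg ξ) hξR (le_of_lt hp0)
      have h1 : (θ * μ₁ + μ₂) * lam * ‖ξ‖ ^ p ≤ (θ * μ₁ + μ₂) * lam * R ^ p := by
        have : (0:ℝ) ≤ (θ * μ₁ + μ₂) * lam := by positivity
        exact mul_le_mul_of_nonneg_left hpow this
      have h2' : -η₂ ≤ A t ξ := by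
        have := abs_le.mp hAb
        linarith [this.1]
      linarith
    · obtain ⟨hb1, hb2, hb3⟩ := hb t ξ hge
      have : (0:ℝ) ≤ (θ * μ₁ + μ₂) * lam * R ^ p := by positivity
      linarith
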